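/- Let β ∈ (0,1] and γ > 0. If the matrices (A_{m,n})_{m,n∈ℕ} and (B_{m,n})_{m,n∈ℕ} both belong to the class E_{γ,β}, then for every γ' ∈ (0, γ), all the series Σ_{k=1}^∞ A_{m,k} B_{k,n} converge absolutely and the product matrix AB belongs to E_{γ',β}, i.e., there exists C'' > 0 with |(AB)_{m,n}| ≤ C''·e^{−γ'|m−n|^β} for all m, n. -/

import Mathlib

open Real

lemma aux_subadd {β : ℝ} (hβ₀ : 0 < β) (hβ₁ : β ≤ 1) {a b : ℝ} (ha : 0 ≤ a) (hb : 0 ≤ b) :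
    (a + b) ^ β ≤ a ^ β + b ^ β := by
  have h := NNReal.rpow_add_le_add_rpow (⟨a, ha⟩ : NNReal) (⟨b, hb⟩ : NNReal) hβ₀.le hβ₁
  have h2 := NNReal.coe_le_coe.2 h
  push_cast [NNReal.coe_rpow] at h2
  exact h2

lemma aux_summable_nat {β ε : ℝ} (hβ₀ : 0 < β) (hε : 0 < ε) :
    Summable (fun j : ℕ => Real.exp (-ε * (j : ℝ) ^ β)) := by
  set N : ℕ := ⌈2 / β⌉₊ with hN
  have hNβ : 2 ≤ (N : ℝ) * β := by
    have h : 2 / β ≤ (N : ℝ) := Nat.le_ceil _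
    calc (2:ℝ) = (2/β) * β := by field_simp
    _ ≤ (N:ℝ) * β := by nlinarith
  have hfac : (0:ℝ) < (N.factorial : ℝ) := by exact_mod_cast N.factorial_pos
  have key : ∀ j : ℕ, 1 ≤ j → Real.exp (-ε * (j:ℝ) ^ β)
      ≤ ((N.factorial : ℝ) / ε ^ N) * ((j:ℝ) ^ (-2 : ℝ)) := by
    intro j hj
    have hj1 : (1:ℝ) ≤ (j:ℝ) := by exact_mod_cast hj
    have hx : (0:ℝ) ≤ ε * (j:ℝ) ^ β := by positivity
    have hpow : (ε * (j:ℝ)^β) ^ N / (N.factorial : ℝ) ≤ Real.exp (ε * (j:ℝ)^β) := by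
      calc (ε * (j:ℝ)^β) ^ N / (N.factorial : ℝ)
          ≤ ∑ i ∈ Finset.range (N+1), (ε * (j:ℝ)^β) ^ i / i.factorial :=
            Finset.single_le_sum (f := fun i => (ε * (j:ℝ)^β) ^ i / (i.factorial:ℝ))
              (fun i _ => by positivity) (Finset.self_mem_range_succ N)
        _ ≤ Real.exp (ε * (j:ℝ)^β) := Real.sum_le_exp_of_nonneg hx _
    have hjb : ((j:ℝ)^β) ^ N = (j:ℝ) ^ ((N:ℝ) * β) := by
      rw [← Real.rpow_natCast ((j:ℝ)^β) N, ← Real.rpow_mul (by positivity), mul_comm]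
    have hj2 : (j:ℝ) ^ (2:ℝ) ≤ (j:ℝ) ^ ((N:ℝ)*β) := Real.rpow_le_rpow_of_exponent_le hj1 hNβ
    have hE : ε ^ N * (j:ℝ)^(2:ℝ) / (N.factorial:ℝ) ≤ Real.exp (ε * (j:ℝ)^β) := by
      refine le_trans ?_ hpow
      rw [mul_pow, hjb]
      have hεN : (0:ℝ) < ε ^ N := by positivity
      have : ε ^ N * (j:ℝ)^(2:ℝ) ≤ ε ^ N * (j:ℝ)^((N:ℝ)*β) := by nlinarith
      gcongr
    have hpos : (0:ℝ) < ε ^ N * (j:ℝ)^(2:ℝ) / (N.factorial:ℝ) := by positivity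
    calc Real.exp (-ε * (j:ℝ)^β) = (Real.exp (ε * (j:ℝ)^β))⁻¹ := by
          rw [neg_mul, Real.exp_neg]
      _ ≤ (ε ^ N * (j:ℝ)^(2:ℝ) / (N.factorial:ℝ))⁻¹ := by
          exact inv_anti₀ hpos hE
      _ = ((N.factorial : ℝ) / ε ^ N) * ((j:ℝ) ^ (-2 : ℝ)) := by
          rw [Real.rpow_neg (by positivity)]
          field_simp
  rw [← summable_nat_add_iff 1]
  apply Summable.of_nonneg_of_le (fun j => (Real.exp_pos _).le)
    (fun j => key (j+1) (Nat.le_add_left 1 j))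
  exact ((summable_nat_add_iff 1).2
    (Real.summable_nat_rpow.2 (by norm_num : (-2:ℝ) < -1))).mul_left _

lemma aux_summable_int {β ε : ℝ} (hβ₀ : 0 < β) (hε : 0 < ε) :
    Summable (fun j : ℤ => Real.exp (-ε * |(j:ℝ)| ^ β)) := by
  apply Summable.of_nat_of_neg
  · exact (aux_summable_nat hβ₀ hε).congr (fun n => by push_cast; rw [abs_of_nonneg (by positivity)])
  · exact (aux_summable_nat hβ₀ hε).congr (fun n => by push_cast; rw [abs_neg, abs_of_nonneg (by positivity)])

/-- If the matrices `A` and `B` both belong to `E_{γ,β}`, then for every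
`γ' ∈ (0,γ)` the product series converge absolutely and `AB ∈ E_{γ',β}`. -/
theorem stmt_15 (β γ : ℝ) (hβ₀ : 0 < β) (hβ₁ : β ≤ 1) (hγ : 0 < γ)
    (A B : ℕ → ℕ → ℂ)
    (hA : ∃ CA > (0:ℝ), ∀ m n : ℕ, 1 ≤ m → 1 ≤ n →
      ‖A m n‖ ≤ CA * Real.exp (-γ * |(m:ℝ) - (n:ℝ)| ^ β))
    (hB : ∃ CB > (0:ℝ), ∀ m n : ℕ, 1 ≤ m → 1 ≤ n →
      ‖B m n‖ ≤ CB * Real.exp (-γ * |(m:ℝ) - (n:ℝ)| ^ β)) :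
    ∀ γ' : ℝ, 0 < γ' → γ' < γ →
      (∀ m n : ℕ, 1 ≤ m → 1 ≤ n → Summable (fun k : ℕ => ‖A m (k+1) * B (k+1) n‖)) ∧
      ∃ C'' > (0:ℝ), ∀ m n : ℕ, 1 ≤ m → 1 ≤ n →
        ‖∑' k : ℕ, A m (k+1) * B (k+1) n‖
          ≤ C'' * Real.exp (-γ' * |(m:ℝ) - (n:ℝ)| ^ β) := by
  obtain ⟨CA, hCA, hAb⟩ := hA
  obtain ⟨CB, hCB, hBb⟩ := hB
  intro γ' hγ'0 hγ'γ
  set ε := γ - γ' with hεdef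
  have hε : 0 < ε := by simp [hεdef]; linarith
  set H : ℤ → ℝ := fun j => Real.exp (-ε * |(j:ℝ)| ^ β) with hH
  have hHsum : Summable H := aux_summable_int hβ₀ hε
  set S : ℝ := ∑' j : ℤ, H j with hS
  have hSpos : 0 < S := Summable.tsum_pos hHsum (fun j => (Real.exp_pos _).le) 0 (Real.exp_pos _)
  -- per m: summability of the exponential weights
  have hg : ∀ m : ℕ, Summable (fun k : ℕ => Real.exp (-ε * |(m:ℝ) - ((k:ℝ)+1)| ^ β)) := by
    intro m
    have hinj : Function.Injective (fun k : ℕ => (m:ℤ) - (k+1)) := by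
      intro a b hab; simp at hab; omega
    have := hHsum.comp_injective hinj
    refine this.congr (fun k => ?_)
    simp only [Function.comp, hH]
    congr 2
    push_cast
    ring_nf
  have hgS : ∀ m : ℕ, (∑' k : ℕ, Real.exp (-ε * |(m:ℝ) - ((k:ℝ)+1)| ^ β)) ≤ S := by
    intro m
    have hinj : Function.Injective (fun k : ℕ => (m:ℤ) - (k+1)) := by
      intro a b hab; simp at hab; omega
    refine Summable.tsum_le_tsum_of_inj _ hinj (fun c _ => (Real.exp_pos _).le)
      (fun k => le_of_eq ?_) (hg m) hHsum
    simp only [hH]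
    congr 2
    push_cast
    ring_nf
  -- key pointwise bound
  have key : ∀ m n k : ℕ, 1 ≤ m → 1 ≤ n →
      ‖A m (k+1) * B (k+1) n‖ ≤ (CA * CB * Real.exp (-γ' * |(m:ℝ) - (n:ℝ)| ^ β))
        * Real.exp (-ε * |(m:ℝ) - ((k:ℝ)+1)| ^ β) := by
    intro m n k hm hn
    set a := |(m:ℝ) - ((k:ℝ)+1)| with ha
    set b := |((k:ℝ)+1) - (n:ℝ)| with hb
    set c := |(m:ℝ) - (n:ℝ)| with hc
    have ha0 : 0 ≤ a := abs_nonneg _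
    have hb0 : 0 ≤ b := abs_nonneg _
    have hc0 : 0 ≤ c := abs_nonneg _
    have htri : c ≤ a + b := abs_sub_le _ _ _
    have hcab : c ^ β ≤ a ^ β + b ^ β :=
      (Real.rpow_le_rpow hc0 htri hβ₀.le).trans (aux_subadd hβ₀ hβ₁ ha0 hb0)
    have haβ : 0 ≤ a ^ β := Real.rpow_nonneg ha0 _
    have hbβ : 0 ≤ b ^ β := Real.rpow_nonneg hb0 _
    have hAk : ‖A m (k+1)‖ ≤ CA * Real.exp (-γ * a ^ β) := by
      have := hAb m (k+1) hm (Nat.le_add_left 1 k)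
      simpa [ha, Nat.cast_add, Nat.cast_one] using this
    have hBk : ‖B (k+1) n‖ ≤ CB * Real.exp (-γ * b ^ β) := by
      have := hBb (k+1) n (Nat.le_add_left 1 k) hn
      simpa [hb, Nat.cast_add, Nat.cast_one] using this
    calc ‖A m (k+1) * B (k+1) n‖ = ‖A m (k+1)‖ * ‖B (k+1) n‖ := norm_mul _ _
      _ ≤ (CA * Real.exp (-γ * a ^ β)) * (CB * Real.exp (-γ * b ^ β)) :=
          mul_le_mul hAk hBk (norm_nonneg _) (by positivity)
      _ = CA * CB * Real.exp (-γ * a ^ β + -γ * b ^ β) := by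
          rw [Real.exp_add]; ring
      _ ≤ CA * CB * Real.exp (-γ' * c ^ β + -ε * a ^ β) := by
          have : -γ * a ^ β + -γ * b ^ β ≤ -γ' * c ^ β + -ε * a ^ β := by
            simp only [hεdef]; nlinarith
          exact mul_le_mul_of_nonneg_left (Real.exp_le_exp.2 this) (by positivity)
      _ = (CA * CB * Real.exp (-γ' * c ^ β)) * Real.exp (-ε * a ^ β) := by
          rw [Real.exp_add]; ring
  have hsum : ∀ m n : ℕ, 1 ≤ m → 1 ≤ n →
      Summable (fun k : ℕ => ‖A m (k+1) * B (k+1) n‖) := by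
    intro m n hm hn
    exact Summable.of_nonneg_of_le (fun k => norm_nonneg _)
      (fun k => key m n k hm hn) ((hg m).mul_left _)
  refine ⟨hsum, CA * CB * S, by positivity, fun m n hm hn => ?_⟩
  have h1 : ‖∑' k : ℕ, A m (k+1) * B (k+1) n‖ ≤ ∑' k : ℕ, ‖A m (k+1) * B (k+1) n‖ :=
    norm_tsum_le_tsum_norm (hsum m n hm hn)
  have h2 : (∑' k : ℕ, ‖A m (k+1) * B (k+1) n‖)
      ≤ ∑' k : ℕ, (CA * CB * Real.exp (-γ' * |(m:ℝ) - (n:ℝ)| ^ β))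
        * Real.exp (-ε * |(m:ℝ) - ((k:ℝ)+1)| ^ β) :=
    Summable.tsum_le_tsum (fun k => key m n k hm hn) (hsum m n hm hn) ((hg m).mul_left _)
  rw [tsum_mul_left] at h2
  have h3 : (CA * CB * Real.exp (-γ' * |(m:ℝ) - (n:ℝ)| ^ β))
      * (∑' k : ℕ, Real.exp (-ε * |(m:ℝ) - ((k:ℝ)+1)| ^ β))
      ≤ (CA * CB * Real.exp (-γ' * |(m:ℝ) - (n:ℝ)| ^ β)) * S := by
    have := hgS m
    have hpos : 0 ≤ CA * CB * Real.exp (-γ' * |(m:ℝ) - (n:ℝ)| ^ β) := by positivity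
    exact mul_le_mul_of_nonneg_left this hpos
  calc ‖∑' k : ℕ, A m (k+1) * B (k+1) n‖
      ≤ (CA * CB * Real.exp (-γ' * |(m:ℝ) - (n:ℝ)| ^ β)) * S := le_trans h1 (le_trans h2 h3)
    _ = CA * CB * S * Real.exp (-γ' * |(m:ℝ) - (n:ℝ)| ^ β) := by ring
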